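/- For a group G, the sequence 0 → H¹(G;ℝ) → Q(G) →^δ H²_b(G;ℝ) →^c H²(G;ℝ) is exact, where Q(G) is the space of homogeneous quasimorphisms, δ sends φ to the class of its coboundary (g,h) ↦ φ(g) + φ(h) − φ(gh), and c is the comparison map. In particular, a homogeneous quasimorphism φ is a homomorphism if and only if δ(φ) = 0. -/

import Mathlib

open Filter Topology

section aux
variable {G : Type*} [Group G]

lemma qm_pow_bound {u : G → ℝ} {B : ℝ} (hB : ∀ g h : G, |u g + u h - u (g * h)| ≤ B) :
    ∀ (x : G) (k : ℕ), |u (x ^ (k + 1)) - (k + 1 : ℝ) * u x| ≤ k * B := by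
  intro x k
  induction k with
  | zero => simp
  | succ n ih =>
    have h1 := hB (x ^ (n + 1)) x
    rw [← pow_succ] at h1
    rw [abs_le] at ih h1 ⊢
    push_cast
    constructor <;> linarith [ih.1, ih.2, h1.1, h1.2]

lemma qm_diff_bound {u : G → ℝ} {B : ℝ} (hB : ∀ g h : G, |u g + u h - u (g * h)| ≤ B)
    (g : G) (N M : ℕ) :
    |u (g ^ ((N + 1) * (M + 1))) / ((N + 1 : ℝ) * (M + 1)) - u (g ^ (N + 1)) / (N + 1)| ≤
      B / (N + 1) := by
  have hB0 : 0 ≤ B := le_trans (abs_nonneg _) (by simpa using hB 1 1)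
  have key := qm_pow_bound hB (g ^ (N + 1)) M
  rw [← pow_mul] at key
  set X := u (g ^ ((N + 1) * (M + 1)))
  set Y := u (g ^ (N + 1))
  have hP : (0:ℝ) < N + 1 := by positivity
  have e : X / ((N + 1 : ℝ) * (M + 1)) - Y / (N + 1) = (X - (M + 1 : ℝ) * Y) / ((N+1) * (M+1)) := by
    field_simp
  rw [e, abs_div, abs_of_pos (show (0:ℝ) < ((N:ℝ)+1)*((M:ℝ)+1) by positivity),
    div_le_div_iff₀ (by positivity) hP]
  nlinarith [key, Nat.cast_nonneg (α := ℝ) M, Nat.cast_nonneg (α := ℝ) N,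
    abs_nonneg (X - ((M:ℝ) + 1) * Y)]

lemma qm_limit_exists {u : G → ℝ} {B : ℝ} (hB : ∀ g h : G, |u g + u h - u (g * h)| ≤ B)
    (g : G) : ∃ L : ℝ, Tendsto (fun n : ℕ => u (g ^ (n + 1)) / (n + 1)) atTop (𝓝 L) := by
  have hB0 : 0 ≤ B := le_trans (abs_nonneg _) (by simpa using hB 1 1)
  set s : ℕ → ℝ := fun n => u (g ^ (n + 1)) / (n + 1) with hs
  have hdist : ∀ n m : ℕ, dist (s n) (s m) ≤ B / (n + 1) + B / (m + 1) := by
    intro n m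
    have h1 := qm_diff_bound hB g n m
    have h2 := qm_diff_bound hB g m n
    rw [Nat.mul_comm (m+1) (n+1)] at h2
    rw [show ((m:ℝ) + 1) * ((n:ℝ) + 1) = ((n:ℝ) + 1) * ((m:ℝ) + 1) from by ring] at h2
    rw [Real.dist_eq]
    set A := u (g ^ ((n + 1) * (m + 1))) / ((n + 1 : ℝ) * (m + 1))
    calc |s n - s m| ≤ |s n - A| + |A - s m| := abs_sub_le _ _ _
      _ = |A - s n| + |A - s m| := by rw [abs_sub_comm]
      _ ≤ B / (n + 1) + B / (m + 1) := add_le_add h1 h2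
  apply cauchySeq_tendsto_of_complete
  apply cauchySeq_of_le_tendsto_0 (fun N : ℕ => 2 * B / (N + 1))
  · intro n m N hn hm
    have hNn : ((N:ℝ) + 1) ≤ (n:ℝ) + 1 := by exact_mod_cast Nat.succ_le_succ hn
    have hNm : ((N:ℝ) + 1) ≤ (m:ℝ) + 1 := by exact_mod_cast Nat.succ_le_succ hm
    have h1 : B / ((n:ℝ) + 1) ≤ B / ((N:ℝ) + 1) := by gcongr
    have h2 : B / ((m:ℝ) + 1) ≤ B / ((N:ℝ) + 1) := by gcongr
    calc dist (s n) (s m) ≤ B / (n + 1) + B / (m + 1) := hdist n m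
      _ ≤ 2 * B / (N + 1) := by rw [two_mul, add_div]; gcongr
  · have h := (tendsto_const_div_atTop_nhds_zero_nat (2 * B)).comp (tendsto_add_atTop_nat 1)
    exact h.congr (fun n => by simp [Function.comp])

end aux

section homog
variable {G : Type*} [Group G]

lemma qm_homogenization {u : G → ℝ} {B : ℝ} (hB : ∀ g h : G, |u g + u h - u (g * h)| ≤ B) :
    ∃ φ : G → ℝ, (∀ (g : G) (n : ℤ), φ (g ^ n) = n * φ g) ∧ (∀ g : G, |u g - φ g| ≤ B) := by
  have hB0 : 0 ≤ B := le_trans (abs_nonneg _) (by simpa using hB 1 1)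
  set φ : G → ℝ := fun g => (qm_limit_exists hB g).choose with hφdef
  have hφ : ∀ g : G, Tendsto (fun n : ℕ => u (g ^ (n + 1)) / (n + 1)) atTop (𝓝 (φ g)) :=
    fun g => (qm_limit_exists hB g).choose_spec
  have hA : ∀ g : G, Tendsto (fun N : ℕ => u (g ^ N) / N) atTop (𝓝 (φ g)) := by
    intro g
    rw [← tendsto_add_atTop_iff_nat 1]
    exact (hφ g).congr (fun n => by push_cast; ring_nf)
  -- φ 1 = 0
  have hone : φ 1 = 0 := by
    have h2 : Tendsto (fun n : ℕ => u ((1:G) ^ (n + 1)) / (n + 1)) atTop (𝓝 0) := by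
      have h := (tendsto_const_div_atTop_nhds_zero_nat (u 1)).comp (tendsto_add_atTop_nat 1)
      exact h.congr (fun n => by simp [Function.comp])
    exact tendsto_nhds_unique (hφ 1) h2
  -- nat homogeneity for exponents ≥ 1
  have hnat : ∀ (g : G) (p : ℕ), φ (g ^ (p + 1)) = (p + 1 : ℝ) * φ g := by
    intro g p
    have htop : Tendsto (fun n : ℕ => (p + 1) * (n + 1)) atTop atTop := by
      apply tendsto_atTop_mono _ tendsto_id
      intro n
      calc n ≤ n + 1 := Nat.le_succ n
        _ ≤ (p + 1) * (n + 1) := Nat.le_mul_of_pos_left _ (Nat.succ_pos p)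
    have t1 : Tendsto (fun n : ℕ => ((p:ℝ) + 1) * (u (g ^ ((p + 1) * (n + 1))) / ((p + 1) * (n + 1) : ℕ)))
        atTop (𝓝 (((p:ℝ) + 1) * φ g)) := ((hA g).comp htop).const_mul _
    have t2 : Tendsto (fun n : ℕ => u ((g ^ (p + 1)) ^ (n + 1)) / (n + 1)) atTop
        (𝓝 (((p:ℝ) + 1) * φ g)) := by
      apply t1.congr
      intro n
      rw [← pow_mul]
      have hc : (((p + 1) * (n + 1) : ℕ) : ℝ) = ((p:ℝ) + 1) * ((n:ℝ) + 1) := by push_cast; ring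
      rw [hc]
      have hp : ((p:ℝ) + 1) ≠ 0 := by positivity
      field_simp
    exact tendsto_nhds_unique (hφ (g ^ (p + 1))) t2
  -- inverse
  have hinv : ∀ g : G, φ g⁻¹ = -φ g := by
    intro g
    have hsum : Tendsto (fun n : ℕ => u (g ^ (n + 1)) / (n + 1) + u ((g⁻¹) ^ (n + 1)) / (n + 1))
        atTop (𝓝 (φ g + φ g⁻¹)) := (hφ g).add (hφ g⁻¹)
    have hzero : Tendsto (fun n : ℕ => u (g ^ (n + 1)) / (n + 1) + u ((g⁻¹) ^ (n + 1)) / (n + 1))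
        atTop (𝓝 0) := by
      apply squeeze_zero_norm (a := fun n : ℕ => (|u 1| + B) / (n + 1))
      · intro n
        have hb := hB (g ^ (n + 1)) ((g⁻¹) ^ (n + 1))
        have hprod : g ^ (n + 1) * (g⁻¹) ^ (n + 1) = 1 := by
          rw [inv_pow, mul_inv_cancel]
        rw [hprod] at hb
        have hn1 : (0:ℝ) < (n:ℝ) + 1 := by positivity
        have e : u (g ^ (n + 1)) / ((n:ℝ) + 1) + u ((g⁻¹) ^ (n + 1)) / ((n:ℝ) + 1)
            = (u (g ^ (n + 1)) + u ((g⁻¹) ^ (n + 1))) / ((n:ℝ) + 1) := by ring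
        rw [Real.norm_eq_abs, e, abs_div, abs_of_pos hn1]
        gcongr
        calc |u (g ^ (n + 1)) + u ((g⁻¹) ^ (n + 1))|
            = |(u (g ^ (n + 1)) + u ((g⁻¹) ^ (n + 1)) - u 1) + u 1| := by ring_nf
          _ ≤ |u (g ^ (n + 1)) + u ((g⁻¹) ^ (n + 1)) - u 1| + |u 1| := abs_add_le _ _
          _ ≤ |u 1| + B := by linarith
      · have h := (tendsto_const_div_atTop_nhds_zero_nat (|u 1| + B)).comp (tendsto_add_atTop_nat 1)
        exact h.congr (fun n => by simp [Function.comp])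
    have := tendsto_nhds_unique hsum hzero
    linarith
  refine ⟨φ, ?_, ?_⟩
  · intro g n
    rcases n with m | m
    · rw [Int.ofNat_eq_coe, zpow_natCast]
      cases m with
      | zero => simp [hone]
      | succ p => rw [hnat g p]; push_cast; ring
    · rw [zpow_negSucc, hinv (g ^ (m + 1)), hnat g m, Int.cast_negSucc]
      push_cast; ring
  · intro g
    have hb : ∀ n : ℕ, |u (g ^ (n + 1)) / ((n:ℝ) + 1) - u g| ≤ B := by
      intro n
      have key := qm_pow_bound hB g n
      have hn1 : (0:ℝ) < (n:ℝ) + 1 := by positivity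
      have e : u (g ^ (n + 1)) / ((n:ℝ) + 1) - u g
          = (u (g ^ (n + 1)) - ((n:ℝ) + 1) * u g) / ((n:ℝ) + 1) := by field_simp
      rw [e, abs_div, abs_of_pos hn1, div_le_iff₀ hn1]
      nlinarith [Nat.cast_nonneg (α := ℝ) n]
    have ht : Tendsto (fun n : ℕ => |u (g ^ (n + 1)) / ((n:ℝ) + 1) - u g|) atTop
        (𝓝 |φ g - u g|) := ((hφ g).sub tendsto_const_nhds).abs
    have := le_of_tendsto ht (Eventually.of_forall hb)
    rwa [abs_sub_comm] at this

end homog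

lemma zero_of_nat_mul_bounded {x B : ℝ} (h : ∀ n : ℕ, |(n:ℝ) * x| ≤ B) : x = 0 := by
  by_contra hx
  have hx' : 0 < |x| := abs_pos.mpr hx
  obtain ⟨n, hn⟩ := exists_nat_gt (B / |x|)
  have h2 : B < n * |x| := (div_lt_iff₀ hx').mp hn
  have h3 := h n
  rw [abs_mul, Nat.abs_cast] at h3
  linarith

/-- Inhomogeneous group 2-cocycle condition (real coefficients, trivial action). -/
def IsCocycle2 {K : Type*} [Group K] (c : K → K → ℝ) : Prop :=
  ∀ g h k : K, c h k - c (g * h) k + c g (h * k) - c g h = 0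

/-- Exactness of `0 → H¹(G;ℝ) → Q(G) → H²_b(G;ℝ) → H²(G;ℝ)`, stated at the level of
cochains: (1) exactness at `Q(G)`: a homogeneous quasimorphism `φ` has `δφ` a bounded
coboundary iff `φ` is a homomorphism; (2) exactness at `H²_b(G;ℝ)`: a bounded 2-cocycle
is a coboundary (of a possibly unbounded function) iff it equals `δφ` for a homogeneous
quasimorphism `φ` up to a bounded coboundary. -/
theorem exactness_H1_Q_H2b_H2 {G : Type*} [Group G] :
    (∀ φ : G → ℝ, (∃ D : ℝ, ∀ g h : G, |φ (g * h) - φ g - φ h| ≤ D) →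
      (∀ (g : G) (n : ℤ), φ (g ^ n) = n * φ g) →
      ((∃ b : G → ℝ, (∃ B : ℝ, ∀ g : G, |b g| ≤ B) ∧
          ∀ g h : G, φ g + φ h - φ (g * h) = b g + b h - b (g * h)) ↔
        ∀ g h : G, φ (g * h) = φ g + φ h)) ∧
    (∀ c : G → G → ℝ, (∃ B : ℝ, ∀ g h : G, |c g h| ≤ B) → IsCocycle2 c →
      ((∃ u : G → ℝ, ∀ g h : G, c g h = u g + u h - u (g * h)) ↔
        ∃ φ : G → ℝ,
          ((∃ D : ℝ, ∀ g h : G, |φ (g * h) - φ g - φ h| ≤ D) ∧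
            ∀ (g : G) (n : ℤ), φ (g ^ n) = n * φ g) ∧
          ∃ b : G → ℝ, (∃ B : ℝ, ∀ g : G, |b g| ≤ B) ∧
            ∀ g h : G, c g h =
              (φ g + φ h - φ (g * h)) + (b g + b h - b (g * h)))) := by
  constructor
  · -- exactness at Q(G)
    intro φ _hq hhom
    constructor
    · rintro ⟨b, ⟨B, hb⟩, heq⟩
      have hψ : ∀ g h : G, (φ g - b g) + (φ h - b h) = φ (g * h) - b (g * h) := by
        intro g h; have := heq g h; linarith
      have hpow : ∀ (g : G) (n : ℕ), φ (g ^ n) - b (g ^ n) = n * (φ g - b g) := by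
        intro g n
        induction n with
        | zero =>
          have h11 := hψ 1 1
          rw [mul_one] at h11
          simp only [pow_zero, Nat.cast_zero, zero_mul]
          linarith
        | succ k ih =>
          rw [pow_succ]
          have := hψ (g ^ k) g
          push_cast
          linarith
      have hφn : ∀ (g : G) (n : ℕ), φ (g ^ n) = n * φ g := by
        intro g n
        have := hhom g (n : ℤ)
        rwa [zpow_natCast, Int.cast_natCast] at this
      have hb0 : ∀ g : G, b g = 0 := by
        intro g
        apply zero_of_nat_mul_bounded (B := B)
        intro n
        have h1 := hpow g n
        have h2 := hφn g n
        have h3 : (n : ℝ) * b g = b (g ^ n) := by linarith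
        rw [h3]; exact hb _
      intro g h
      have := heq g h
      rw [hb0 g, hb0 h, hb0 (g * h)] at this
      linarith
    · intro hhom'
      exact ⟨0, ⟨0, by simp⟩, fun g h => by simp [hhom' g h]⟩
  · -- exactness at H²_b
    rintro c ⟨B, hBc⟩ _hcoc
    constructor
    · rintro ⟨v, hv⟩
      have hB' : ∀ g h : G, |v g + v h - v (g * h)| ≤ B := by
        intro g h; rw [← hv g h]; exact hBc g h
      obtain ⟨φ, hhom, hclose⟩ := qm_homogenization hB'
      refine ⟨φ, ⟨⟨4 * B, ?_⟩, hhom⟩, fun g => v g - φ g, ⟨B, fun g => hclose g⟩, ?_⟩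
      · intro g h
        have h1 := hB' g h
        have h2 := hclose g
        have h3 := hclose h
        have h4 := hclose (g * h)
        rw [abs_le] at h1 h2 h3 h4 ⊢
        constructor <;> linarith [h1.1, h1.2, h2.1, h2.2, h3.1, h3.2, h4.1, h4.2]
      · intro g h
        rw [hv g h]; ring
    · rintro ⟨φ, ⟨_, _⟩, b, ⟨B', hb⟩, heq⟩
      exact ⟨fun g => φ g + b g, fun g h => by rw [heq g h]; ring⟩
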